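/- Let K be a field, F ∈ K[x]^{m×n}, s ∈ ℤ^m with s ≥ rdeg(F) entrywise, and τ a positive integer. Let M ∈ K[x]^{n×n} be column reduced with every column degree of M at least τ. Then every vector p ∈ Rel_M(F) with rdeg_s(p) < τ satisfies pF = 0, i.e. p ∈ Ker(F). -/

import Mathlib

open Polynomial Matrix

noncomputable section

variable {K : Type*} [Field K]

/-- Degree of a univariate polynomial, viewed in `ℤ ∪ {⊥}`. -/
def pdegZ (p : K[X]) : WithBot ℤ := p.degree.map (Nat.cast : ℕ → ℤ)

/-- Shifted degree (`s`-degree) of a row vector. -/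
def sdeg {n : ℕ} (s : Fin n → ℤ) (p : Fin n → K[X]) : WithBot ℤ :=
  Finset.univ.sup fun j => pdegZ (p j) + (s j : WithBot ℤ)

/-- `s`-leading matrix of `P`. -/
def leadMat {m n : ℕ} (s : Fin n → ℤ) (P : Matrix (Fin m) (Fin n) K[X]) :
    Matrix (Fin m) (Fin n) K :=
  Matrix.of fun i j =>
    if pdegZ (P i j) + (s j : WithBot ℤ) = sdeg s (P i) then (P i j).leadingCoeff else 0

/-- `P` is `s`-reduced: its `s`-leading matrix has full row rank. -/
def IsShiftReduced {m n : ℕ} (s : Fin n → ℤ) (P : Matrix (Fin m) (Fin n) K[X]) : Prop :=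
  (leadMat s P).rank = m

/-- `j` is the `s`-pivot index of the row `p`: the largest index where the `s`-degree is attained. -/
def IsPivotIndex {n : ℕ} (s : Fin n → ℤ) (p : Fin n → K[X]) (j : Fin n) : Prop :=
  pdegZ (p j) + (s j : WithBot ℤ) = sdeg s p ∧
  ∀ j', j < j' → pdegZ (p j') + (s j' : WithBot ℤ) ≠ sdeg s p

/-- `P` is in `s`-weak Popov form: no zero row and strictly increasing `s`-pivot indices. -/
def IsWeakPopov {m n : ℕ} (s : Fin n → ℤ) (P : Matrix (Fin m) (Fin n) K[X]) : Prop :=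
  (∀ i, P i ≠ 0) ∧ ∃ piv : Fin m → Fin n, StrictMono piv ∧ ∀ i, IsPivotIndex s (P i) (piv i)

/-- The rows of `Kb` form a basis of the left kernel of `F`. -/
def IsKernelBasis {ℓ m : ℕ} {β : Type*} [Fintype β]
    (Kb : Matrix (Fin ℓ) (Fin m) K[X]) (F : Matrix (Fin m) β K[X]) : Prop :=
  (∀ i, Kb i ᵥ* F = 0) ∧
  LinearIndependent K[X] (fun i : Fin ℓ => Kb i) ∧
  ∀ p : Fin m → K[X], p ᵥ* F = 0 → ∃ u : Fin ℓ → K[X], p = u ᵥ* Kb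

/-- Membership in the relation module `Rel_M(F)`. -/
def InRelModule {m n : ℕ} (M : Matrix (Fin n) (Fin n) K[X])
    (F : Matrix (Fin m) (Fin n) K[X]) (p : Fin m → K[X]) : Prop :=
  ∃ q : Fin n → K[X], p ᵥ* F = q ᵥ* M

/-- The rows of `A` form a basis of the relation module `Rel_M(F)`. -/
def IsRelationBasis {ℓ m n : ℕ} (M : Matrix (Fin n) (Fin n) K[X])
    (A : Matrix (Fin ℓ) (Fin m) K[X]) (F : Matrix (Fin m) (Fin n) K[X]) : Prop :=
  (∀ i, InRelModule M F (A i)) ∧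
  LinearIndependent K[X] (fun i : Fin ℓ => A i) ∧
  ∀ p : Fin m → K[X], InRelModule M F p → ∃ u : Fin ℓ → K[X], p = u ᵥ* A

/-- Rank of a polynomial matrix: its rank over the fraction field `K(x)`. -/
def polyRank {α β : Type*} [Fintype β] (F : Matrix α β K[X]) : ℕ :=
  (F.map (algebraMap K[X] (RatFunc K))).rank

/-- Lexicographic comparison of tuples. -/
def lexLE {r n : ℕ} (a b : Fin r → Fin n) : Prop :=
  ∀ i, (∀ k, k < i → a k = b k) → a i ≤ b i

/-- `j` lists the column rank profile of `F`: the lexicographically smallest strictly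
increasing tuple of `rank F` column indices selecting columns of full rank. -/
def IsColRankProfile {α : Type*} {n r : ℕ} (F : Matrix α (Fin n) K[X])
    (j : Fin r → Fin n) : Prop :=
  StrictMono j ∧ polyRank F = r ∧ polyRank (F.submatrix id j) = r ∧
  ∀ j' : Fin r → Fin n, StrictMono j' → polyRank (F.submatrix id j') = r → lexLE j j'


/-- Degree of the `j`-th column of `M`. -/
def colDeg {K : Type*} [Field K] {m n : ℕ} (M : Matrix (Fin m) (Fin n) K[X]) (j : Fin n) :
    WithBot ℤ :=
  Finset.univ.sup fun i => pdegZ (M i j)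

/-- `M` is column reduced: its transpose is `0`-reduced. -/
def IsColReduced {K : Type*} [Field K] {m n : ℕ} (M : Matrix (Fin m) (Fin n) K[X]) : Prop :=
  IsShiftReduced (0 : Fin m → ℤ) Mᵀ


section Helpers

lemma castWB (d : ℕ) : ((d:ℤ) : WithBot ℤ) = WithBot.map (Nat.cast : ℕ → ℤ) (d : WithBot ℕ) := by
  simp [Nat.cast_withBot, WithBot.map_coe]

lemma mapcast_le {a b : WithBot ℕ} :
    WithBot.map (Nat.cast : ℕ → ℤ) a ≤ WithBot.map (Nat.cast : ℕ → ℤ) b ↔ a ≤ b := by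
  cases a <;> cases b <;> simp [WithBot.map_coe]

lemma mapcast_lt {a b : WithBot ℕ} :
    WithBot.map (Nat.cast : ℕ → ℤ) a < WithBot.map (Nat.cast : ℕ → ℤ) b ↔ a < b := by
  cases a <;> cases b <;> simp [WithBot.map_coe]

lemma pdegZ_le_cast {p : K[X]} {d : ℕ} :
    pdegZ p ≤ ((d:ℤ) : WithBot ℤ) ↔ p.degree ≤ (d : WithBot ℕ) := by
  rw [pdegZ, castWB, mapcast_le]

lemma pdegZ_lt_cast {p : K[X]} {d : ℕ} :
    pdegZ p < ((d:ℤ) : WithBot ℤ) ↔ p.degree < (d : WithBot ℕ) := by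
  rw [pdegZ, castWB, mapcast_lt]

lemma pdegZ_eq_cast {p : K[X]} {d : ℕ} :
    pdegZ p = ((d:ℤ) : WithBot ℤ) ↔ p.degree = (d : WithBot ℕ) := by
  rw [pdegZ, castWB]
  constructor
  · intro h; exact le_antisymm (mapcast_le.mp h.le) (mapcast_le.mp h.ge)
  · intro h; rw [h]

lemma pdegZ_mul (a b : K[X]) : pdegZ (a * b) = pdegZ a + pdegZ b := by
  simp only [pdegZ, degree_mul]
  cases ha : a.degree <;> cases hb : b.degree <;>
    simp [WithBot.map_coe, ← WithBot.coe_add]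

end Helpers

/-- Relations of small `s`-degree lie in the kernel. -/
theorem stmt13 {K : Type*} [Field K] {m n : ℕ}
    (F : Matrix (Fin m) (Fin n) K[X])
    (s : Fin m → ℤ) (hs : ∀ i, sdeg (0 : Fin n → ℤ) (F i) ≤ (s i : WithBot ℤ))
    (τ : ℤ) (hτ : 0 < τ)
    (M : Matrix (Fin n) (Fin n) K[X]) (hMred : IsColReduced M)
    (hMdeg : ∀ j, (τ : WithBot ℤ) ≤ colDeg M j)
    (p : Fin m → K[X]) (hp : InRelModule M F p)
    (hdeg : sdeg s p < (τ : WithBot ℤ)) :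
    p ᵥ* F = 0 := by
  classical
  obtain ⟨q, hq⟩ := hp
  rcases Nat.eq_zero_or_pos n with hn | hn
  · subst hn; exact funext fun j => j.elim0
  haveI : Nonempty (Fin n) := ⟨⟨0, hn⟩⟩
  suffices hq0 : q = 0 by rw [hq, hq0, Matrix.zero_vecMul]
  by_contra hq0
  -- column degrees as naturals
  have hc : ∀ j, ∃ c : ℕ, colDeg M j = ((c:ℤ) : WithBot ℤ) ∧ (τ : WithBot ℤ) ≤ ((c:ℤ) : WithBot ℤ) := by
    intro j
    have h1 := hMdeg j
    obtain ⟨i, -, hi⟩ := Finset.exists_mem_eq_sup Finset.univ Finset.univ_nonempty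
      (fun i => pdegZ (M i j))
    rw [colDeg] at h1 ⊢
    rw [hi] at h1 ⊢
    cases hd : (M i j).degree with
    | bot =>
      rw [pdegZ, hd] at h1
      exact absurd h1 (by simp)
    | coe d =>
      refine ⟨d, ?_, ?_⟩
      · rw [pdegZ, hd, WithBot.map_coe]
      · rw [pdegZ, hd, WithBot.map_coe] at h1; exact h1
  choose c hc1 hc2 using hc
  have hMle : ∀ k j, (M k j).degree ≤ (c j : WithBot ℕ) := by
    intro k j
    refine pdegZ_le_cast.mp ?_
    rw [← hc1 j, colDeg]
    exact Finset.le_sup (f := fun i => pdegZ (M i j)) (Finset.mem_univ k)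
  have hMnat : ∀ k j, (M k j).natDegree ≤ c j := fun k j =>
    Polynomial.natDegree_le_iff_degree_le.mpr (hMle k j)
  -- identify the leading matrix
  have hsd : ∀ j, sdeg (0 : Fin n → ℤ) (Mᵀ j) = colDeg M j := by
    intro j
    unfold sdeg colDeg
    congr 1; funext k
    simp [Matrix.transpose_apply]
  have hA : ∀ j k, (leadMat (0 : Fin n → ℤ) Mᵀ) j k = (M k j).coeff (c j) := by
    intro j k
    show (if pdegZ (Mᵀ j k) + (((0 : Fin n → ℤ) k : ℤ) : WithBot ℤ) = sdeg (0 : Fin n → ℤ) (Mᵀ j)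
      then (Mᵀ j k).leadingCoeff else 0) = (M k j).coeff (c j)
    rw [hsd j, hc1 j]
    simp only [Pi.zero_apply, Int.cast_zero, Matrix.transpose_apply]
    simp only [show (((0:ℤ)) : WithBot ℤ) = 0 from rfl, add_zero]
    split_ifs with h
    · have hdeg' : (M k j).degree = (c j : WithBot ℕ) := pdegZ_eq_cast.mp h
      rw [Polynomial.leadingCoeff, Polynomial.natDegree_eq_of_degree_eq_some hdeg']
    · have hlt : (M k j).degree < (c j : WithBot ℕ) :=
        lt_of_le_of_ne (hMle k j) (fun he => h (pdegZ_eq_cast.mpr he))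
      exact (Polynomial.coeff_eq_zero_of_degree_lt hlt).symm
  -- injectivity of mulVec
  have hrank : (leadMat (0 : Fin n → ℤ) Mᵀ).rank = n := hMred
  have hinj : ∀ v : Fin n → K, (leadMat (0 : Fin n → ℤ) Mᵀ) *ᵥ v = 0 → v = 0 := by
    have hsurj : Function.Surjective (leadMat (0 : Fin n → ℤ) Mᵀ).mulVecLin := by
      rw [← LinearMap.range_eq_top]
      apply Submodule.eq_top_of_finrank_eq
      rw [← Matrix.rank, hrank, Module.finrank_fintype_fun_eq_card, Fintype.card_fin]
    have hinj' := (LinearMap.injective_iff_surjective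
      (f := (leadMat (0 : Fin n → ℤ) Mᵀ).mulVecLin)).mpr hsurj
    intro v hv
    have : (leadMat (0 : Fin n → ℤ) Mᵀ).mulVecLin v = (leadMat (0 : Fin n → ℤ) Mᵀ).mulVecLin 0 := by
      simp [Matrix.mulVecLin_apply, hv]
    exact hinj' this
  -- the top coefficient vector of q
  set δ := Finset.univ.sup fun k => (q k).natDegree with hδdef
  have hδ : ∀ k, (q k).natDegree ≤ δ := fun k =>
    Finset.le_sup (f := fun k => (q k).natDegree) (Finset.mem_univ k)
  obtain ⟨k0, hk0⟩ : ∃ k, q k ≠ 0 := by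
    by_contra h; push_neg at h; exact hq0 (funext h)
  have hv : ∃ k, (q k).coeff δ ≠ 0 := by
    obtain ⟨k1, -, hk1⟩ := Finset.exists_mem_eq_sup Finset.univ Finset.univ_nonempty
      (fun k => (q k).natDegree)
    by_cases hz : q k1 = 0
    · have hδ0 : δ = 0 := by rw [hδdef, hk1, hz, Polynomial.natDegree_zero]
      refine ⟨k0, ?_⟩
      have h0 : (q k0).natDegree = 0 := Nat.le_zero.mp (hδ0 ▸ hδ k0)
      rw [hδ0, ← h0]
      exact Polynomial.leadingCoeff_ne_zero.mpr hk0
    · refine ⟨k1, ?_⟩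
      rw [hδdef, hk1]
      exact Polynomial.leadingCoeff_ne_zero.mpr hz
  set v : Fin n → K := fun k => (q k).coeff δ with hvdef
  have hv0 : v ≠ 0 := by
    obtain ⟨k, hk⟩ := hv
    exact fun h => hk (show v k = 0 from h ▸ rfl)
  have hAv : (leadMat (0 : Fin n → ℤ) Mᵀ) *ᵥ v ≠ 0 := fun h => hv0 (hinj v h)
  obtain ⟨j, hj⟩ := Function.ne_iff.mp hAv
  -- the corresponding coefficient of q ᵥ* M is nonzero
  have hcoeff : ((q ᵥ* M) j).coeff (δ + c j) = ∑ k, (q k).coeff δ * (M k j).coeff (c j) := by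
    have : (q ᵥ* M) j = ∑ k, q k * M k j := rfl
    rw [this, Polynomial.finset_sum_coeff]
    exact Finset.sum_congr rfl fun k _ =>
      Polynomial.coeff_mul_add_eq_of_natDegree_le (hδ k) (hMnat k j)
  have hne : ((q ᵥ* M) j).coeff (δ + c j) ≠ 0 := by
    rw [hcoeff]
    have : ((leadMat (0 : Fin n → ℤ) Mᵀ) *ᵥ v) j
        = ∑ k, (q k).coeff δ * (M k j).coeff (c j) := by
      show ∑ k, (leadMat (0 : Fin n → ℤ) Mᵀ) j k * v k = _
      exact Finset.sum_congr rfl fun k _ => by rw [hA j k, hvdef, mul_comm]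
    rw [← this]
    simpa using hj
  -- but p ᵥ* F has small degree
  have hsmall : ((p ᵥ* F) j).degree < (c j : WithBot ℕ) := by
    have hterm : ∀ i, (p i * F i j).degree < (c j : WithBot ℕ) := by
      intro i
      refine pdegZ_lt_cast.mp ?_
      rw [pdegZ_mul]
      have h1 : pdegZ (F i j) ≤ (s i : WithBot ℤ) := by
        refine le_trans ?_ (hs i)
        have := Finset.le_sup (f := fun j' => pdegZ (F i j') + (((0 : Fin n → ℤ) j' : ℤ) : WithBot ℤ))
          (Finset.mem_univ j)
        simpa [sdeg] using this
      have h2 : pdegZ (p i) + (s i : WithBot ℤ) ≤ sdeg s p :=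
        Finset.le_sup (f := fun i => pdegZ (p i) + (s i : WithBot ℤ)) (Finset.mem_univ i)
      calc pdegZ (p i) + pdegZ (F i j) ≤ pdegZ (p i) + (s i : WithBot ℤ) :=
            add_le_add_right h1 _
        _ ≤ sdeg s p := h2
        _ < (τ : WithBot ℤ) := hdeg
        _ ≤ ((c j : ℤ) : WithBot ℤ) := hc2 j
    have hsum : (p ᵥ* F) j = ∑ i, p i * F i j := rfl
    rw [hsum]
    refine lt_of_le_of_lt (Polynomial.degree_sum_le _ _) ?_
    exact Finset.sup_lt_iff (by exact WithBot.bot_lt_coe _) |>.mpr fun i _ => hterm i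
  have hzero : ((p ᵥ* F) j).coeff (δ + c j) = 0 := by
    refine Polynomial.coeff_eq_zero_of_degree_lt (lt_of_lt_of_le hsmall ?_)
    exact_mod_cast Nat.le_add_left (c j) δ
  rw [hq] at hzero
  exact hne hzero


end
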